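/- The Fresnel propagation of a centered Gaussian p_σ(x) = (2πσ²)^{−m/2} exp(−|x|²/(2σ²)) is given explicitly by D(p_σ)(x) = (σ̃/σ)^{m/2} c₀ exp(i|x|²/(2η²)) p_{σ̃}(x), where η² = (1 + σ⁴𝔣²)/𝔣, σ̃² = η²/(σ²𝔣), and c₀ is a complex constant of modulus 1 (depending on σ, 𝔣, m). -/

import Mathlib

open MeasureTheory Complex Real

noncomputable section

/-- The `m`-dimensional Fourier transform with the convention
`F(f)(ξ) = (2π)^{-m/2} ∫ exp(-i ξ·x) f(x) dx`. -/
def fourierTr (m : ℕ) (f : EuclideanSpace ℝ (Fin m) → ℂ)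
    (ξ : EuclideanSpace ℝ (Fin m)) : ℂ :=
  ((2 * Real.pi) ^ (-(m : ℝ) / 2) : ℝ) *
    ∫ x : EuclideanSpace ℝ (Fin m),
      Complex.exp (-Complex.I * ((inner ℝ ξ x : ℝ) : ℂ)) * f x

/-- The inverse Fourier transform, `F⁻¹(g)(x) = (2π)^{-m/2} ∫ exp(i ξ·x) g(ξ) dξ`. -/
def fourierInv (m : ℕ) (g : EuclideanSpace ℝ (Fin m) → ℂ)
    (x : EuclideanSpace ℝ (Fin m)) : ℂ :=
  ((2 * Real.pi) ^ (-(m : ℝ) / 2) : ℝ) *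
    ∫ ξ : EuclideanSpace ℝ (Fin m),
      Complex.exp (Complex.I * ((inner ℝ ξ x : ℝ) : ℂ)) * g ξ

/-- The Fresnel multiplier `m_f(ξ) = exp(-i|ξ|²/(2𝔣))`. -/
def fresnelSymbol (m : ℕ) (𝔣 : ℝ) (ξ : EuclideanSpace ℝ (Fin m)) : ℂ :=
  Complex.exp (-Complex.I * ((‖ξ‖ ^ 2 : ℝ) : ℂ) / (2 * (𝔣 : ℂ)))

/-- The Fresnel propagator `D(h) = F⁻¹(m_f · F(h))`. -/
def fresnelProp (m : ℕ) (𝔣 : ℝ) (h : EuclideanSpace ℝ (Fin m) → ℂ)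
    (x : EuclideanSpace ℝ (Fin m)) : ℂ :=
  fourierInv m (fun ξ => fresnelSymbol m 𝔣 ξ * fourierTr m h ξ) x

/-- The Fresnel convolution kernel
`k_f(x) = exp(−imπ/4)·(𝔣/(2π))^{m/2}·exp(i𝔣|x|²/2)`. -/
def fresnelKernel (m : ℕ) (𝔣 : ℝ) (x : EuclideanSpace ℝ (Fin m)) : ℂ :=
  Complex.exp (-Complex.I * m * Real.pi / 4) * ((𝔣 / (2 * Real.pi)) ^ ((m : ℝ) / 2) : ℝ) *
    Complex.exp (Complex.I * (𝔣 : ℂ) * ((‖x‖ ^ 2 : ℝ) : ℂ) / 2)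

/-- The chirp factor `n_f(x) = exp(i𝔣|x|²/2)`. -/
def fresnelChirp (m : ℕ) (𝔣 : ℝ) (x : EuclideanSpace ℝ (Fin m)) : ℂ :=
  Complex.exp (Complex.I * (𝔣 : ℂ) * ((‖x‖ ^ 2 : ℝ) : ℂ) / 2)

/-- The normalized centered Gaussian `p_σ(x) = (2πσ²)^{−m/2} exp(−|x|²/(2σ²))`. -/
def gaussianPeak (m : ℕ) (σ : ℝ) (x : EuclideanSpace ℝ (Fin m)) : ℂ :=
  (((2 * Real.pi * σ ^ 2) ^ (-(m : ℝ) / 2) : ℝ) : ℂ) *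
    Complex.exp (-((‖x‖ ^ 2 : ℝ) : ℂ) / (2 * (σ : ℂ) ^ 2))

lemma fourierTr_gaussianPeak (m : ℕ) (σ : ℝ) (hσ : 0 < σ) (ξ : EuclideanSpace ℝ (Fin m)) :
    fourierTr m (gaussianPeak m σ) ξ =
      ((2 * Real.pi) ^ (-(m : ℝ) / 2) : ℝ) *
        Complex.exp (-((σ ^ 2 : ℝ) : ℂ) / 2 * ((‖ξ‖ ^ 2 : ℝ) : ℂ)) := by
  have hb : (0:ℝ) < ((((1 / (2 * σ ^ 2)) : ℝ) : ℂ)).re := by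
    rw [Complex.ofReal_re]; positivity
  have hfun : (fun x : EuclideanSpace ℝ (Fin m) =>
      Complex.exp (-Complex.I * ((inner ℝ ξ x : ℝ) : ℂ)) * gaussianPeak m σ x)
      = fun x => (((2 * Real.pi * σ ^ 2) ^ (-(m : ℝ) / 2) : ℝ) : ℂ) *
          Complex.exp (-(((1 / (2 * σ ^ 2) : ℝ)) : ℂ) * (‖x‖ : ℂ) ^ 2
            + (-Complex.I) * ((inner ℝ ξ x : ℝ) : ℂ)) := by
    funext x
    rw [gaussianPeak, Complex.exp_add]
    have hσ' : ((σ : ℂ))^2 ≠ 0 := by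
      simpa using pow_ne_zero 2 (Complex.ofReal_ne_zero.2 hσ.ne')
    push_cast
    field_simp
  rw [fourierTr, hfun, integral_const_mul _ _,
    GaussianFourier.integral_cexp_neg_mul_sq_norm_add hb (-Complex.I) ξ]
  rw [finrank_euclideanSpace_fin]
  have h1 : ((Real.pi : ℂ) / (((1 / (2 * σ ^ 2) : ℝ)) : ℂ)) ^ ((m : ℂ) / 2)
      = (((2 * Real.pi * σ ^ 2) ^ ((m : ℝ) / 2) : ℝ) : ℂ) := by
    rw [Complex.ofReal_cpow (by positivity) ]
    push_cast
    congr 1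
    field_simp
  have h2 : (((2 * Real.pi * σ ^ 2) ^ (-(m:ℝ) / 2) : ℝ) : ℂ) *
      (((2 * Real.pi * σ ^ 2) ^ ((m:ℝ) / 2) : ℝ) : ℂ) = 1 := by
    rw [← Complex.ofReal_mul, ← Real.rpow_add (by positivity)]
    rw [neg_div, neg_add_cancel, Real.rpow_zero, Complex.ofReal_one]
  have h3 : (-Complex.I) ^ 2 * ((‖ξ‖ : ℂ)) ^ 2 / (4 * (((1 / (2 * σ ^ 2) : ℝ)) : ℂ))
      = -((σ ^ 2 : ℝ) : ℂ) / 2 * ((‖ξ‖ ^ 2 : ℝ) : ℂ) := by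
    have hσ' : ((σ : ℂ)) ≠ 0 := Complex.ofReal_ne_zero.2 hσ.ne'
    have hI : (-Complex.I) ^ 2 = -1 := by
      rw [neg_pow, Complex.I_sq]; norm_num
    rw [hI]
    push_cast
    field_simp
    ring
  rw [h1, h3, show (((2 * Real.pi * σ ^ 2) ^ (-(m:ℝ) / 2) : ℝ) : ℂ) *
      ((((2 * Real.pi * σ ^ 2) ^ ((m:ℝ) / 2) : ℝ) : ℂ) *
        Complex.exp (-((σ ^ 2 : ℝ) : ℂ) / 2 * ((‖ξ‖ ^ 2 : ℝ) : ℂ)))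
      = Complex.exp (-((σ ^ 2 : ℝ) : ℂ) / 2 * ((‖ξ‖ ^ 2 : ℝ) : ℂ)) from by
        rw [← mul_assoc, h2, one_mul]]

lemma fresnelProp_gaussianPeak_eq (m : ℕ) (𝔣 σ : ℝ) (h𝔣 : 0 < 𝔣) (hσ : 0 < σ)
    (x : EuclideanSpace ℝ (Fin m)) :
    fresnelProp m 𝔣 (gaussianPeak m σ) x =
      (((2 * Real.pi) ^ (-(m : ℝ)) : ℝ) : ℂ) *
        ((Real.pi : ℂ) / (((σ ^ 2 / 2 : ℝ) : ℂ) + ((1 / (2 * 𝔣) : ℝ) : ℂ) * Complex.I))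
          ^ ((m : ℂ) / 2) *
        Complex.exp (-((‖x‖ ^ 2 : ℝ) : ℂ) /
          (4 * ((((σ ^ 2 / 2 : ℝ) : ℂ)) + ((1 / (2 * 𝔣) : ℝ) : ℂ) * Complex.I))) := by
  set a : ℂ := (((σ ^ 2 / 2 : ℝ) : ℂ)) + ((1 / (2 * 𝔣) : ℝ) : ℂ) * Complex.I with ha
  have ha_re : 0 < a.re := by
    have : a.re = σ ^ 2 / 2 := by simp [ha, ← Complex.ofReal_pow]
    rw [this]; positivity
  have hfun : (fun ξ : EuclideanSpace ℝ (Fin m) =>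
      Complex.exp (Complex.I * ((inner ℝ ξ x : ℝ) : ℂ)) *
        (fresnelSymbol m 𝔣 ξ * fourierTr m (gaussianPeak m σ) ξ))
      = fun ξ => (((2 * Real.pi) ^ (-(m : ℝ) / 2) : ℝ) : ℂ) *
          Complex.exp (-a * (‖ξ‖ : ℂ) ^ 2 + Complex.I * ((inner ℝ x ξ : ℝ) : ℂ)) := by
    funext ξ
    rw [fourierTr_gaussianPeak m σ hσ ξ, fresnelSymbol, real_inner_comm ξ x]
    rw [show Complex.exp (-Complex.I * ((‖ξ‖ ^ 2 : ℝ) : ℂ) / (2 * (𝔣 : ℂ))) *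
        ((((2 * Real.pi) ^ (-(m : ℝ) / 2) : ℝ) : ℂ) *
          Complex.exp (-((σ ^ 2 : ℝ) : ℂ) / 2 * ((‖ξ‖ ^ 2 : ℝ) : ℂ)))
        = (((2 * Real.pi) ^ (-(m : ℝ) / 2) : ℝ) : ℂ) *
          (Complex.exp (-Complex.I * ((‖ξ‖ ^ 2 : ℝ) : ℂ) / (2 * (𝔣 : ℂ))) *
            Complex.exp (-((σ ^ 2 : ℝ) : ℂ) / 2 * ((‖ξ‖ ^ 2 : ℝ) : ℂ))) from by ring]
    rw [← Complex.exp_add, ← mul_assoc, mul_comm (Complex.exp _), mul_assoc, ← Complex.exp_add]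
    congr 2
    have h𝔣' : ((𝔣 : ℂ)) ≠ 0 := Complex.ofReal_ne_zero.2 h𝔣.ne'
    rw [ha]
    push_cast
    field_simp
    ring
  rw [fresnelProp, fourierInv, hfun, integral_const_mul _ _,
    GaussianFourier.integral_cexp_neg_mul_sq_norm_add ha_re Complex.I x,
    finrank_euclideanSpace_fin]
  have h2 : (((2 * Real.pi) ^ (-(m : ℝ) / 2) : ℝ) : ℂ) *
      (((2 * Real.pi) ^ (-(m : ℝ) / 2) : ℝ) : ℂ) = (((2 * Real.pi) ^ (-(m : ℝ)) : ℝ) : ℂ) := by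
    rw [← Complex.ofReal_mul, ← Real.rpow_add (by positivity)]
    norm_num
  have h3 : Complex.I ^ 2 * ((‖x‖ : ℂ)) ^ 2 / (4 * a)
      = -((‖x‖ ^ 2 : ℝ) : ℂ) / (4 * a) := by
    rw [Complex.I_sq]
    push_cast
    ring
  rw [h3, ← mul_assoc, ← mul_assoc, h2]

/-- The Gaussian-beam formula: with `η² = (1+σ⁴𝔣²)/𝔣` and `σ̃² = η²/(σ²𝔣)`,
`D(p_σ)(x) = (σ̃/σ)^{m/2}·c₀·exp(i|x|²/(2η²))·p_{σ̃}(x)` for some unimodular constant `c₀`. -/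
theorem fresnelProp_gaussian (m : ℕ) (𝔣 σ : ℝ) (h𝔣 : 0 < 𝔣) (hσ : 0 < σ) :
    ∃ c₀ : ℂ, ‖c₀‖ = 1 ∧
      ∀ x : EuclideanSpace ℝ (Fin m),
        fresnelProp m 𝔣 (gaussianPeak m σ) x =
          (((Real.sqrt ((1 + σ ^ 4 * 𝔣 ^ 2) / (𝔣 * (σ ^ 2 * 𝔣))) / σ) ^ ((m : ℝ) / 2) : ℝ) : ℂ) *
            c₀ *
            Complex.exp (Complex.I * ((‖x‖ ^ 2 : ℝ) : ℂ) /
              (2 * (((1 + σ ^ 4 * 𝔣 ^ 2) / 𝔣 : ℝ) : ℂ))) *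
            gaussianPeak m (Real.sqrt ((1 + σ ^ 4 * 𝔣 ^ 2) / (𝔣 * (σ ^ 2 * 𝔣)))) x := by
  set s : ℝ := Real.sqrt ((1 + σ ^ 4 * 𝔣 ^ 2) / (𝔣 * (σ ^ 2 * 𝔣))) with hs_def
  set a : ℂ := (((σ ^ 2 / 2 : ℝ) : ℂ)) + ((1 / (2 * 𝔣) : ℝ) : ℂ) * Complex.I with ha
  have hs : 0 < s := Real.sqrt_pos.2 (by positivity)
  have hs2 : s ^ 2 = (1 + σ ^ 4 * 𝔣 ^ 2) / (𝔣 * (σ ^ 2 * 𝔣)) :=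
    Real.sq_sqrt (by positivity)
  -- the absolute value of a
  have habs : ‖a‖ = Real.sqrt ((σ ^ 2 / 2) ^ 2 + (1 / (2 * 𝔣)) ^ 2) :=
    Complex.norm_add_mul_I _ _
  have habs_pos : 0 < ‖a‖ := by
    rw [habs]; positivity
  -- key scalar identity : σ s = 2 |a|
  have hkey : σ * s = 2 * ‖a‖ := by
    rw [habs, hs_def]
    rw [show σ * Real.sqrt ((1 + σ ^ 4 * 𝔣 ^ 2) / (𝔣 * (σ ^ 2 * 𝔣)))
        = Real.sqrt (σ ^ 2 * ((1 + σ ^ 4 * 𝔣 ^ 2) / (𝔣 * (σ ^ 2 * 𝔣)))) from by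
      rw [Real.sqrt_mul (by positivity), Real.sqrt_sq hσ.le]]
    rw [show (2 : ℝ) * Real.sqrt ((σ ^ 2 / 2) ^ 2 + (1 / (2 * 𝔣)) ^ 2)
        = Real.sqrt (4 * ((σ ^ 2 / 2) ^ 2 + (1 / (2 * 𝔣)) ^ 2)) from by
      rw [Real.sqrt_mul (by norm_num),
        show Real.sqrt 4 = 2 from by
          rw [show (4:ℝ) = 2 ^ 2 by norm_num, Real.sqrt_sq (by norm_num)]]]
    congr 1
    field_simp
    ring
  -- the unimodular constant
  set c₀ : ℂ := ((((2 * Real.pi) ^ (-(m : ℝ)) : ℝ) : ℂ) *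
      ((Real.pi : ℂ) / a) ^ ((m : ℂ) / 2)) /
      (((((s / σ) ^ ((m : ℝ) / 2) : ℝ)) : ℂ) *
        (((2 * Real.pi * s ^ 2) ^ (-(m : ℝ) / 2) : ℝ) : ℂ)) with hc₀
  have hden1 : (0:ℝ) < (s / σ) ^ ((m : ℝ) / 2) := Real.rpow_pos_of_pos (by positivity) _
  have hden2 : (0:ℝ) < (2 * Real.pi * s ^ 2) ^ (-(m : ℝ) / 2) :=
    Real.rpow_pos_of_pos (by positivity) _
  refine ⟨c₀, ?_, ?_⟩
  · -- ‖c₀‖ = 1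
    have hnorm_cpow : ‖((Real.pi : ℂ) / a) ^ ((m : ℂ) / 2)‖
        = (Real.pi / ‖a‖) ^ ((m : ℝ) / 2) := by
      rw [show ((m : ℂ) / 2) = (((m / 2 : ℝ)) : ℂ) from by push_cast; ring,
        Complex.norm_cpow_real, norm_div, Complex.norm_real, Real.norm_eq_abs,
        abs_of_pos Real.pi_pos]
    have hmain : (2 * Real.pi) ^ (-(m : ℝ)) * (Real.pi / ‖a‖) ^ ((m : ℝ) / 2)
        = (s / σ) ^ ((m : ℝ) / 2) * (2 * Real.pi * s ^ 2) ^ (-(m : ℝ) / 2) := by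
      rw [show (-(m : ℝ) / 2) = (-1) * ((m : ℝ) / 2) from by ring,
        Real.rpow_mul (show (0:ℝ) ≤ 2 * Real.pi * s ^ 2 by positivity),
        show (-(m : ℝ)) = (-2) * ((m : ℝ) / 2) from by ring,
        Real.rpow_mul (show (0:ℝ) ≤ 2 * Real.pi by positivity),
        ← Real.mul_rpow (by positivity) (by positivity),
        ← Real.mul_rpow (by positivity) (by positivity)]
      congr 1
      rw [show ((2 * Real.pi) ^ (-2 : ℝ)) = ((2 * Real.pi) ^ 2)⁻¹ from by
          rw [Real.rpow_neg (by positivity)]; norm_num,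
        show ((2 * Real.pi * s ^ 2) ^ (-1 : ℝ)) = (2 * Real.pi * s ^ 2)⁻¹ from by
          rw [Real.rpow_neg (by positivity)]; norm_num]
      have hπ : (0:ℝ) < Real.pi := Real.pi_pos
      field_simp
      linear_combination hkey
    rw [hc₀, norm_div, norm_mul, norm_mul, hnorm_cpow, Complex.norm_real, Complex.norm_real,
      Complex.norm_real, Real.norm_eq_abs, Real.norm_eq_abs, Real.norm_eq_abs,
      abs_of_pos (Real.rpow_pos_of_pos (by positivity) _), abs_of_pos hden1, abs_of_pos hden2,
      hmain, div_self (by positivity)]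
  · intro x
    rw [fresnelProp_gaussianPeak_eq m 𝔣 σ h𝔣 hσ x, ← ha, gaussianPeak]
    -- split the exponential
    have hexp : Complex.exp (-((‖x‖ ^ 2 : ℝ) : ℂ) / (4 * a)) =
        Complex.exp (Complex.I * ((‖x‖ ^ 2 : ℝ) : ℂ) /
            (2 * (((1 + σ ^ 4 * 𝔣 ^ 2) / 𝔣 : ℝ) : ℂ))) *
          Complex.exp (-((‖x‖ ^ 2 : ℝ) : ℂ) / (2 * (s : ℂ) ^ 2)) := by
      have hsC : ((s : ℂ)) ^ 2 = (((1 + σ ^ 4 * 𝔣 ^ 2) / (𝔣 * (σ ^ 2 * 𝔣)) : ℝ) : ℂ) := by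
        rw [← hs2]; push_cast; ring
      have h𝔣' : ((𝔣 : ℂ)) ≠ 0 := Complex.ofReal_ne_zero.2 h𝔣.ne'
      have hσ' : ((σ : ℂ)) ≠ 0 := Complex.ofReal_ne_zero.2 hσ.ne'
      have hden : (1 : ℂ) + (σ : ℂ) ^ 4 * (𝔣 : ℂ) ^ 2 ≠ 0 := by
        have : ((1 + σ ^ 4 * 𝔣 ^ 2 : ℝ) : ℂ) ≠ 0 := Complex.ofReal_ne_zero.2 (by positivity)
        push_cast at this; exact this
      rw [← Complex.exp_add]
      congr 1
      rw [hsC]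
      simp only [ha]
      push_cast
      field_simp
      ring_nf
      have hne : ((𝔣:ℂ) * (σ:ℂ) ^ 2 * 8 + Complex.I * 8) ≠ 0 := by
        intro h
        have := congrArg Complex.im h
        simp [← Complex.ofReal_pow] at this
      field_simp [hne]
      ring_nf
      have hne2 : ((σ:ℂ) ^ 2 * 𝔣 + Complex.I) ≠ 0 := by
        intro h
        have := congrArg Complex.im h
        simp [← Complex.ofReal_pow] at this
      have key := mul_inv_cancel₀ hne2
      linear_combination (-((‖x‖:ℂ) ^ 2) * ((σ:ℂ) ^ 2 * 𝔣 - Complex.I)) * key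
        + (-((‖x‖:ℂ) ^ 2) * ((σ:ℂ) ^ 2 * 𝔣 + Complex.I)⁻¹) * Complex.I_sq
    -- the constant identity
    have hconst : (((2 * Real.pi) ^ (-(m : ℝ)) : ℝ) : ℂ) *
        ((Real.pi : ℂ) / a) ^ ((m : ℂ) / 2)
        = (((((s / σ) ^ ((m : ℝ) / 2) : ℝ)) : ℂ)) * c₀ *
          ((((2 * Real.pi * s ^ 2) ^ (-(m : ℝ) / 2) : ℝ)) : ℂ) := by
      rw [hc₀]
      have h1 : ((((s / σ) ^ ((m : ℝ) / 2) : ℝ)) : ℂ) ≠ 0 :=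
        Complex.ofReal_ne_zero.2 hden1.ne'
      have h2 : ((((2 * Real.pi * s ^ 2) ^ (-(m : ℝ) / 2) : ℝ)) : ℂ) ≠ 0 :=
        Complex.ofReal_ne_zero.2 hden2.ne'
      field_simp
      rw [mul_div_assoc, div_self, mul_one]
      exact Complex.ofReal_ne_zero.2 (Real.rpow_pos_of_pos (by positivity) _).ne'
    rw [hexp, hconst]
    push_cast
    ring
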